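/- Let V be a real inner product space and let ᾱ₁, α₂, α₃, α₄, β₁, β₂, β₃, β₄ ∈ V satisfy: ⟪β₁,β₁⟫ = ⟪α₂,α₂⟫ = ⟪β₃,β₃⟫ = ⟪ᾱ₁,ᾱ₁⟫ = 2; ⟪β₁,α₂⟫ = −1, ⟪α₂,β₃⟫ = −1, ⟪β₃,ᾱ₁⟫ = −1, ⟪β₁,β₃⟫ = ⟪β₁,ᾱ₁⟫ = ⟪α₂,ᾱ₁⟫ = 0; ⟪ᾱ₁,β₂⟫ + ⟪α₂,β₂⟫ = 0 and ⟪β₁,β₂⟫ = ⟪β₃,β₂⟫ = 0; each of β₁, α₂, β₃, ᾱ₁ is orthogonal to α₃ and to α₄; and ⟪ᾱ₁,β₄⟫ = −1, ⟪α₂,β₄⟫ = 0, ⟪β₁,β₄⟫ = ⟪β₃,β₄⟫ = 0 (the relevant Gram relations of the Carter diagram E₈(a₂)). Set α₁ := −(ᾱ₁ + β₃ + α₂ + β₁). Then ⟪α₁,α₁⟫ = 2, ⟪α₁,β₁⟫ = −1, ⟪α₁,β₄⟫ = 1, and α₁ is orthogonal to each of α₂, α₃, α₄, β₂, β₃ (the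 Gram relations of the Dynkin diagram E₈ up to the sign of the edge {α₁,β₄}). -/
import Mathlib

open scoped RealInnerProductSpace


theorem stmt9 {V : Type*} [NormedAddCommGroup V] [InnerProductSpace ℝ V]
    (αb₁ α₂ α₃ α₄ β₁ β₂ β₃ β₄ : V)
    (h0 : ⟪β₁, β₁⟫ = 2)
    (h1 : ⟪α₂, α₂⟫ = 2)
    (h2 : ⟪β₃, β₃⟫ = 2)
    (h3 : ⟪αb₁, αb₁⟫ = 2)
    (h4 : ⟪β₁, α₂⟫ = -1)
    (h5 : ⟪α₂, β₃⟫ = -1)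
    (h6 : ⟪β₃, αb₁⟫ = -1)
    (h7 : ⟪β₁, β₃⟫ = 0)
    (h8 : ⟪β₁, αb₁⟫ = 0)
    (h9 : ⟪α₂, αb₁⟫ = 0)
    (h10 : ⟪αb₁, β₂⟫ + ⟪α₂, β₂⟫ = 0)
    (h11 : ⟪β₁, β₂⟫ = 0)
    (h12 : ⟪β₃, β₂⟫ = 0)
    (h13 : ⟪β₁, α₃⟫ = 0)
    (h14 : ⟪β₁, α₄⟫ = 0)
    (h15 : ⟪α₂, α₃⟫ = 0)
    (h16 : ⟪α₂, α₄⟫ = 0)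
    (h17 : ⟪β₃, α₃⟫ = 0)
    (h18 : ⟪β₃, α₄⟫ = 0)
    (h19 : ⟪αb₁, α₃⟫ = 0)
    (h20 : ⟪αb₁, α₄⟫ = 0)
    (h21 : ⟪αb₁, β₄⟫ = -1)
    (h22 : ⟪α₂, β₄⟫ = 0)
    (h23 : ⟪β₁, β₄⟫ = 0)
    (h24 : ⟪β₃, β₄⟫ = 0)
    (α₁ : V) (hdef : α₁ = -(αb₁ + β₃ + α₂ + β₁)) :
    ⟪α₁, α₁⟫ = 2 ∧
    ⟪α₁, β₁⟫ = -1 ∧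
    ⟪α₁, β₄⟫ = 1 ∧
    ⟪α₁, α₂⟫ = 0 ∧
    ⟪α₁, α₃⟫ = 0 ∧
    ⟪α₁, α₄⟫ = 0 ∧
    ⟪α₁, β₂⟫ = 0 ∧
    ⟪α₁, β₃⟫ = 0 := by
  have c1 := real_inner_comm β₁ α₂
  have c2 := real_inner_comm α₂ β₃
  have c3 := real_inner_comm β₃ αb₁
  have c4 := real_inner_comm β₁ β₃
  have c5 := real_inner_comm β₁ αb₁
  have c6 := real_inner_comm α₂ αb₁
  subst hdef
  simp only [inner_neg_left, inner_neg_right, inner_add_left, inner_add_right]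
  refine ⟨?_, ?_, ?_, ?_, ?_, ?_, ?_, ?_⟩ <;> linarith
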